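/- For the domain-wall tensor A_0 = |0⟩(⟨0|+⟨1|), A_1 = |1⟩⟨1| ∈ M_2, the relations A_0² = A_0, A_1² = A_1, A_1 A_0 = 0 hold, and for n ≥ 2: S_n(A) = Span{ |0⟩^{⊗n}, |1⟩^{⊗n}, |DW_n⟩ }, where |DW_n⟩ = Σ_{ℓ=1}^{n−1} |0⟩^{⊗ℓ} ⊗ |1⟩^{⊗(n−ℓ)}. -/

import Mathlib

open scoped BigOperators

noncomputable section

def prodA {d D : ℕ} (A : Fin d → Matrix (Fin D) (Fin D) ℂ) {k : ℕ} (s : Fin k → Fin d) :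
    Matrix (Fin D) (Fin D) ℂ :=
  (List.ofFn fun t => A (s t)).prod

def mpsVec {d D : ℕ} (A : Fin d → Matrix (Fin D) (Fin D) ℂ) (X : Matrix (Fin D) (Fin D) ℂ)
    (k : ℕ) : (Fin k → Fin d) → ℂ :=
  fun s => (X * prodA A s).trace

/-- The physical MPS subspace S_k(A). -/
def mpsSpace {d D : ℕ} (A : Fin d → Matrix (Fin D) (Fin D) ℂ) (k : ℕ) :
    Submodule ℂ ((Fin k → Fin d) → ℂ) :=
  Submodule.span ℂ (Set.range fun X => mpsVec A X k)

/-- The computational basis state |s⟩, as a coefficient vector. -/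
def basisState {d k : ℕ} (s : Fin k → Fin d) : (Fin k → Fin d) → ℂ :=
  fun t => if t = s then 1 else 0

/-- The domain-wall superposition |DW_n⟩ = ∑_{ℓ=1}^{n−1} |0⟩^{⊗ℓ} ⊗ |1⟩^{⊗(n−ℓ)}. -/
def DWstate (n : ℕ) : (Fin n → Fin 2) → ℂ :=
  ∑ l ∈ Finset.Ico 1 n, basisState (fun t : Fin n => if (t : ℕ) < l then 0 else 1)

/-! ### Auxiliary material -/

namespace DWaux

def wall (n l : ℕ) : Fin n → Fin 2 := fun t => if (t : ℕ) < l then 0 else 1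

def B0 : Matrix (Fin 2) (Fin 2) ℂ := !![1, 1; 0, 0]
def B1 : Matrix (Fin 2) (Fin 2) ℂ := !![0, 0; 0, 1]
def EE : Matrix (Fin 2) (Fin 2) ℂ := !![0, 1; 0, 0]

lemma B0_B0 : B0 * B0 = B0 := by
  ext i j; fin_cases i <;> fin_cases j <;> simp [B0, Matrix.mul_apply, Fin.sum_univ_two]
lemma B0_B1 : B0 * B1 = EE := by
  ext i j; fin_cases i <;> fin_cases j <;> simp [B0, B1, EE, Matrix.mul_apply, Fin.sum_univ_two]
lemma B0_EE : B0 * EE = EE := by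
  ext i j; fin_cases i <;> fin_cases j <;> simp [B0, EE, Matrix.mul_apply, Fin.sum_univ_two]
lemma B1_B0 : B1 * B0 = 0 := by
  ext i j; fin_cases i <;> fin_cases j <;> simp [B0, B1, Matrix.mul_apply, Fin.sum_univ_two]
lemma B1_B1 : B1 * B1 = B1 := by
  ext i j; fin_cases i <;> fin_cases j <;> simp [B1, Matrix.mul_apply, Fin.sum_univ_two]
lemma B1_EE : B1 * EE = 0 := by
  ext i j; fin_cases i <;> fin_cases j <;> simp [B1, EE, Matrix.mul_apply, Fin.sum_univ_two]

lemma trace_B0 (X : Matrix (Fin 2) (Fin 2) ℂ) : (X * B0).trace = X 0 0 + X 1 0 := by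
  simp [B0, Matrix.trace_fin_two, Matrix.mul_apply, Fin.sum_univ_two]
lemma trace_B1 (X : Matrix (Fin 2) (Fin 2) ℂ) : (X * B1).trace = X 1 1 := by
  simp [B1, Matrix.trace_fin_two, Matrix.mul_apply, Fin.sum_univ_two]
lemma trace_EE (X : Matrix (Fin 2) (Fin 2) ℂ) : (X * EE).trace = X 1 0 := by
  simp [EE, Matrix.trace_fin_two, Matrix.mul_apply, Fin.sum_univ_two]

lemma prodA_succ {d D : ℕ} (A : Fin d → Matrix (Fin D) (Fin D) ℂ) {k : ℕ}
    (s : Fin (k+1) → Fin d) :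
    prodA A s = A (s 0) * prodA A (fun i : Fin k => s i.succ) := by
  simp [prodA, List.ofFn_succ]

lemma prodA_one {d D : ℕ} (A : Fin d → Matrix (Fin D) (Fin D) ℂ) (s : Fin 1 → Fin d) :
    prodA A s = A (s 0) := by
  simp [prodA, List.ofFn_succ]

lemma wall_succ_tail (n l : ℕ) :
    (fun i : Fin n => wall (n+1) l i.succ) = wall n (l-1) := by
  funext i
  simp only [wall, Fin.val_succ]
  by_cases h : (i : ℕ) + 1 < l
  · rw [if_pos h, if_pos (by omega)]
  · rw [if_neg h, if_neg (by omega)]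

lemma wall_inj {n l l' : ℕ} (hl : l < n) (hl' : l' < n) (h : wall n l = wall n l') : l = l' := by
  by_contra hne
  rcases Nat.lt_or_ge l l' with H | H
  · have := congrFun h ⟨l, hl⟩
    simp [wall, H] at this
  · have H' : l' < l := by omega
    have := congrFun h ⟨l', hl'⟩
    simp [wall, H'] at this

lemma wall_top (n : ℕ) : wall n n = fun _ => 0 := by
  funext t; simp [wall, t.isLt]

lemma wall_bot (n : ℕ) : wall n 0 = fun _ => 1 := by
  funext t; simp [wall]

lemma fin2_cases (x : Fin 2) : x = 0 ∨ x = 1 := by omega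

lemma classify (A : Fin 2 → Matrix (Fin 2) (Fin 2) ℂ)
    (hA0 : A 0 = B0) (hA1 : A 1 = B1) :
    ∀ n, 1 ≤ n → ∀ s : Fin n → Fin 2,
      ((∀ t, s t = 0) ∧ prodA A s = B0) ∨
      ((∀ t, s t = 1) ∧ prodA A s = B1) ∨
      ((∃ l, 0 < l ∧ l < n ∧ s = wall n l) ∧ prodA A s = EE) ∨
      ((∀ l, l ≤ n → s ≠ wall n l) ∧ prodA A s = 0) := by
  intro n hn
  induction n, hn using Nat.le_induction with
  | base =>
    intro s
    rcases fin2_cases (s 0) with h | h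
    · left
      refine ⟨fun t => by rw [Subsingleton.elim t 0, h], ?_⟩
      rw [prodA_one, h, hA0]
    · right; left
      refine ⟨fun t => by rw [Subsingleton.elim t 0, h], ?_⟩
      rw [prodA_one, h, hA1]
  | succ n hn ih =>
    intro s
    set s' : Fin n → Fin 2 := fun i => s i.succ with hs'
    have hsplit := prodA_succ A s
    have wallz : ∀ m, 0 < m → wall (n+1) m 0 = 0 := by
      intro m hm; simp [wall, hm]
    rcases fin2_cases (s 0) with h0 | h0
    · -- s 0 = 0
      rcases ih s' with ⟨hall, hp⟩ | ⟨hall, hp⟩ | ⟨⟨l, hl0, hln, hw⟩, hp⟩ | ⟨hnw, hp⟩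
      · left
        constructor
        · intro t
          refine Fin.cases ?_ ?_ t
          · exact h0
          · intro i; exact hall i
        · rw [hsplit, h0, hA0, hp, B0_B0]
      · right; right; left
        constructor
        · refine ⟨1, one_pos, by omega, ?_⟩
          funext t
          refine Fin.cases ?_ ?_ t
          · simp [wall, h0]
          · intro i
            have := hall i
            simp only [wall, Fin.val_succ]
            rw [if_neg (by omega)]
            exact this
        · rw [hsplit, h0, hA0, hp, B0_B1]
      · right; right; left
        constructor
        · refine ⟨l + 1, by omega, by omega, ?_⟩
          funext t
          refine Fin.cases ?_ ?_ t
          · simp [wall, h0]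
          · intro i
            have := congrFun hw i
            simp only [wall] at this ⊢
            simp only [Fin.val_succ]
            simp only [Nat.add_lt_add_iff_right]
            exact this
        · rw [hsplit, h0, hA0, hp, B0_EE]
      · right; right; right
        constructor
        · intro m hm heq
          rcases Nat.eq_zero_or_pos m with rfl | hm0
          · have := congrFun heq 0
            rw [h0] at this
            simp [wall] at this
          · have : s' = wall n (m-1) := by
              simp only [hs', heq]
              exact wall_succ_tail n m
            exact hnw (m-1) (by omega) this
        · rw [hsplit, h0, hA0, hp, mul_zero]
    · -- s 0 = 1
      have nowall : ∀ m, m ≤ n + 1 → s = wall (n+1) m → s' = wall n 0 := by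
        intro m hm heq
        have hm0 : m = 0 := by
          by_contra hmne
          have := congrFun heq 0
          rw [h0, wallz m (by omega)] at this
          exact absurd this (by decide)
        subst hm0
        simp only [hs', heq]
        exact wall_succ_tail n 0
      rcases ih s' with ⟨hall, hp⟩ | ⟨hall, hp⟩ | ⟨⟨l, hl0, hln, hw⟩, hp⟩ | ⟨hnw, hp⟩
      · right; right; right
        constructor
        · intro m hm heq
          have h00 := congrFun (nowall m hm heq) ⟨0, by omega⟩
          rw [hall ⟨0, by omega⟩] at h00
          simp [wall] at h00
        · rw [hsplit, h0, hA1, hp, B1_B0]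
      · right; left
        constructor
        · intro t
          refine Fin.cases h0 (fun i => hall i) t
        · rw [hsplit, h0, hA1, hp, B1_B1]
      · right; right; right
        constructor
        · intro m hm heq
          have h00 := congrFun (nowall m hm heq) ⟨0, by omega⟩
          rw [hw] at h00
          simp [wall, hl0] at h00
        · rw [hsplit, h0, hA1, hp, B1_EE]
      · right; right; right
        constructor
        · intro m hm heq
          exact hnw 0 (by omega) (nowall m hm heq)
        · rw [hsplit, h0, hA1, hp, mul_zero]

lemma DWstate_apply (n : ℕ) (s : Fin n → Fin 2) :
    DWstate n s = ∑ l ∈ Finset.Ico 1 n, (if s = wall n l then (1:ℂ) else 0) := by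
  rw [DWstate, Finset.sum_apply]
  rfl

lemma mpsVec_eq (A : Fin 2 → Matrix (Fin 2) (Fin 2) ℂ)
    (hA0 : A 0 = B0) (hA1 : A 1 = B1) (X : Matrix (Fin 2) (Fin 2) ℂ) (n : ℕ) (hn : 2 ≤ n) :
    mpsVec A X n = (X 0 0 + X 1 0) • basisState (fun _ : Fin n => 0)
      + X 1 1 • basisState (fun _ : Fin n => 1) + X 1 0 • DWstate n := by
  funext s
  simp only [Pi.add_apply, Pi.smul_apply, smul_eq_mul, basisState, mpsVec]
  rcases classify A hA0 hA1 n (by omega) s with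
    ⟨hall, hp⟩ | ⟨hall, hp⟩ | ⟨⟨l, hl0, hln, hw⟩, hp⟩ | ⟨hnw, hp⟩
  · -- all zeros
    have hs : s = fun _ => 0 := funext hall
    have hne1 : s ≠ fun _ => 1 := by
      intro h
      have := congrFun h ⟨0, by omega⟩
      rw [hall ⟨0, by omega⟩] at this
      exact absurd this (by decide)
    have hz : ∀ l ∈ Finset.Ico 1 n, (if s = wall n l then (1:ℂ) else 0) = 0 := by
      intro l hl
      rw [Finset.mem_Ico] at hl
      rw [if_neg]
      intro h
      have := congrFun h ⟨l, hl.2⟩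
      rw [hall ⟨l, hl.2⟩] at this
      simp [wall] at this
    rw [hp, trace_B0, if_pos hs, if_neg hne1, DWstate_apply, Finset.sum_eq_zero hz]
    ring
  · -- all ones
    have hs : s = fun _ => 1 := funext hall
    have hne0 : s ≠ fun _ => 0 := by
      intro h
      have := congrFun h ⟨0, by omega⟩
      rw [hall ⟨0, by omega⟩] at this
      exact absurd this (by decide)
    have hz : ∀ l ∈ Finset.Ico 1 n, (if s = wall n l then (1:ℂ) else 0) = 0 := by
      intro l hl
      rw [Finset.mem_Ico] at hl
      rw [if_neg]
      intro h
      have := congrFun h ⟨0, by omega⟩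
      rw [hall ⟨0, by omega⟩] at this
      simp only [wall] at this
      rw [if_pos (by show 0 < l; omega)] at this
      exact absurd this (by decide)
    rw [hp, trace_B1, if_neg hne0, if_pos hs, DWstate_apply, Finset.sum_eq_zero hz]
    ring
  · -- a domain wall
    have hne0 : s ≠ fun _ => 0 := by
      intro h
      have h1 := congrFun hw ⟨l, hln⟩
      rw [congrFun h ⟨l, hln⟩] at h1
      simp [wall] at h1
    have hne1 : s ≠ fun _ => 1 := by
      intro h
      have h1 := congrFun hw ⟨0, by omega⟩
      rw [congrFun h ⟨0, by omega⟩] at h1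
      simp only [wall] at h1
      rw [if_pos (by simpa using hl0)] at h1
      exact absurd h1 (by decide)
    have hDW : DWstate n s = 1 := by
      rw [DWstate_apply]
      rw [Finset.sum_eq_single_of_mem l (Finset.mem_Ico.mpr ⟨hl0, hln⟩)]
      · rw [if_pos hw]
      · intro b hb hbne
        rw [Finset.mem_Ico] at hb
        rw [if_neg]
        intro h
        exact hbne (wall_inj hb.2 hln (h.symm.trans hw))
    rw [hp, trace_EE, if_neg hne0, if_neg hne1, hDW]
    ring
  · -- no wall at all
    have hne0 : s ≠ fun _ => 0 := by
      intro h
      exact hnw n le_rfl (h.trans (wall_top n).symm)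
    have hne1 : s ≠ fun _ => 1 := by
      intro h
      exact hnw 0 (by omega) (h.trans (wall_bot n).symm)
    have hz : ∀ l ∈ Finset.Ico 1 n, (if s = wall n l then (1:ℂ) else 0) = 0 := by
      intro l hl
      rw [Finset.mem_Ico] at hl
      exact if_neg (hnw l (by omega))
    rw [hp, mul_zero, Matrix.trace_zero, if_neg hne0, if_neg hne1, DWstate_apply,
      Finset.sum_eq_zero hz]
    ring

end DWaux

open DWaux in
/-- for the domain-wall tensor, A₀² = A₀, A₁² = A₁, A₁A₀ = 0, and
S_n(A) = Span{|0⟩^{⊗n}, |1⟩^{⊗n}, |DW_n⟩} for n ≥ 2. -/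
theorem domainWall_mpsSpace (A : Fin 2 → Matrix (Fin 2) (Fin 2) ℂ)
    (hA0 : A 0 = !![1, 1; 0, 0]) (hA1 : A 1 = !![0, 0; 0, 1]) :
    A 0 * A 0 = A 0 ∧ A 1 * A 1 = A 1 ∧ A 1 * A 0 = 0 ∧
    ∀ n, 2 ≤ n →
      mpsSpace A n = Submodule.span ℂ
        {basisState (fun _ : Fin n => 0), basisState (fun _ : Fin n => 1), DWstate n} := by
  have hA0' : A 0 = B0 := hA0
  have hA1' : A 1 = B1 := hA1
  refine ⟨by rw [hA0']; exact B0_B0, by rw [hA1']; exact B1_B1,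
    by rw [hA0', hA1']; exact B1_B0, fun n hn => ?_⟩
  apply le_antisymm
  · apply Submodule.span_le.2
    rintro v ⟨X, rfl⟩
    show mpsVec A X n ∈ _
    rw [mpsVec_eq A hA0' hA1' X n hn]
    have h0 : basisState (fun _ : Fin n => (0 : Fin 2)) ∈ Submodule.span ℂ
        ({basisState (fun _ : Fin n => 0), basisState (fun _ : Fin n => 1), DWstate n} :
          Set ((Fin n → Fin 2) → ℂ)) :=
      Submodule.subset_span (by simp)
    have h1 : basisState (fun _ : Fin n => (1 : Fin 2)) ∈ Submodule.span ℂ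
        ({basisState (fun _ : Fin n => 0), basisState (fun _ : Fin n => 1), DWstate n} :
          Set ((Fin n → Fin 2) → ℂ)) :=
      Submodule.subset_span (by simp)
    have h2 : DWstate n ∈ Submodule.span ℂ
        ({basisState (fun _ : Fin n => 0), basisState (fun _ : Fin n => 1), DWstate n} :
          Set ((Fin n → Fin 2) → ℂ)) :=
      Submodule.subset_span (by simp)
    exact add_mem (add_mem (Submodule.smul_mem _ _ h0) (Submodule.smul_mem _ _ h1))
      (Submodule.smul_mem _ _ h2)
  · apply Submodule.span_le.2
    have e0 : mpsVec A !![1, 0; 0, 0] n = basisState (fun _ : Fin n => 0) := by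
      rw [mpsVec_eq A hA0' hA1' _ n hn]
      norm_num
    have e1 : mpsVec A !![0, 0; 0, 1] n = basisState (fun _ : Fin n => 1) := by
      rw [mpsVec_eq A hA0' hA1' _ n hn]
      norm_num
    have e2 : mpsVec A !![0, 0; 1, 0] n
        = basisState (fun _ : Fin n => 0) + DWstate n := by
      rw [mpsVec_eq A hA0' hA1' _ n hn]
      norm_num
    have m0 : basisState (fun _ : Fin n => (0 : Fin 2)) ∈ mpsSpace A n :=
      Submodule.subset_span ⟨_, e0⟩
    have m1 : basisState (fun _ : Fin n => (1 : Fin 2)) ∈ mpsSpace A n :=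
      Submodule.subset_span ⟨_, e1⟩
    have m2 : DWstate n ∈ mpsSpace A n := by
      have : DWstate n = mpsVec A !![0, 0; 1, 0] n - basisState (fun _ : Fin n => 0) := by
        rw [e2]; abel
      rw [this]
      exact sub_mem (Submodule.subset_span ⟨_, rfl⟩) m0
    rintro v hv
    rcases hv with rfl | rfl | rfl
    · exact m0
    · exact m1
    · exact m2
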